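/- Let B₊ be an oriented incidence matrix of a connected graph with diagonal weight matrix W₊ having strictly positive entries, set L₊ = B₊·W₊·B₊ᵀ, let u ≠ v be two vertices with effective resistance R_uv = (e_u − e_v)ᵀ·L₊†·(e_u − e_v) (L₊† the Moore–Penrose pseudoinverse of L₊), and let d > 1/R_uv. Then the consensus dynamics with the additional negative edge of weight −d between u and v is unstable: with L = L₊ − d·(e_u − e_v)·(e_u − e_v)ᵀ, there exists x₀ ∈ ℝ^V such that ‖exp(−t·L)·x₀‖ → ∞ as t → ∞, where exp is the matrix exponential. -/

import Mathlib

open Matrix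

set_option maxRecDepth 4000

/-- `B` is an oriented incidence matrix: every column has exactly one `1`,
exactly one `-1`, and zeros elsewhere. -/
def IsIncidenceMatrix {V E : Type*} (B : Matrix V E ℝ) : Prop :=
  ∀ e : E, ∃ i j : V, i ≠ j ∧ B i e = 1 ∧ B j e = -1 ∧
    ∀ k : V, k ≠ i → k ≠ j → B k e = 0

lemma exp_mulVec_eigen {V : Type*} [Fintype V] [DecidableEq V]
    (A : Matrix V V ℝ) (w : V → ℝ) (μ : ℝ) (h : A *ᵥ w = μ • w) :
    (NormedSpace.exp A) *ᵥ w = Real.exp μ • w := by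
  letI : SeminormedRing (Matrix V V ℝ) := Matrix.linftyOpSemiNormedRing
  letI : NormedRing (Matrix V V ℝ) := Matrix.linftyOpNormedRing
  letI : NormedAlgebra ℝ (Matrix V V ℝ) := Matrix.linftyOpNormedAlgebra
  have hpow : ∀ n : ℕ, (A ^ n) *ᵥ w = (μ ^ n) • w := by
    intro n
    induction n with
    | zero => simp
    | succ n ih =>
      rw [pow_succ, pow_succ, ← Matrix.mulVec_mulVec, h, Matrix.mulVec_smul, ih,
        smul_smul, mul_comm]
  have hT : ∃ T : Matrix V V ℝ →L[ℝ] (V → ℝ), ∀ M : Matrix V V ℝ, T M = M *ᵥ w := by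
    refine ⟨LinearMap.toContinuousLinearMap
      { toFun := fun M : Matrix V V ℝ => M *ᵥ w
        map_add' := fun M N => Matrix.add_mulVec M N w
        map_smul' := fun c M => Matrix.smul_mulVec c M w }, fun M => rfl⟩
  obtain ⟨T, hTdef⟩ := hT
  have hs : HasSum (fun n : ℕ => (Nat.factorial n : ℝ)⁻¹ • A ^ n) (NormedSpace.exp A) :=
    NormedSpace.exp_series_hasSum_exp' A
  have hs2 : HasSum (fun n : ℕ => ((Nat.factorial n : ℝ)⁻¹ * μ ^ n) • w)
      ((NormedSpace.exp A) *ᵥ w) := by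
    have := hs.mapL T
    simpa [hTdef, Matrix.smul_mulVec, hpow, smul_smul] using this
  have hs3 : HasSum (fun n : ℕ => ((Nat.factorial n : ℝ)⁻¹ * μ ^ n) • w) (Real.exp μ • w) := by
    have hμ : HasSum (fun n : ℕ => (Nat.factorial n : ℝ)⁻¹ • μ ^ n) (Real.exp μ) := by
      rw [Real.exp_eq_exp_ℝ]
      exact NormedSpace.exp_series_hasSum_exp' μ
    simpa [smul_eq_mul] using hμ.smul_const w
  exact hs2.unique hs3

/-- if a single negative edge of weight `−d` with `d > 1/R_uv` is added
between `u` and `v`, the consensus dynamics `ẋ = −L·x` is unstable: some solution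
`t ↦ exp(−t·L)·x₀` blows up. -/
theorem single_negative_edge_consensus_unstable
    {V Ep : Type*} [Fintype V] [Fintype Ep]
    [DecidableEq V] [DecidableEq Ep] [Nonempty V]
    (Bp : Matrix V Ep ℝ) (hBp : IsIncidenceMatrix Bp)
    (wp : Ep → ℝ) (hwp : ∀ e, 0 < wp e)
    -- the positive graph is connected
    (hConn : LinearMap.ker Bpᵀ.mulVecLin = Submodule.span ℝ {(fun _ : V => (1 : ℝ))})
    -- `Ld` is the Moore–Penrose pseudoinverse of `L₊ = B₊·W₊·B₊ᵀ`
    (Ld : Matrix V V ℝ)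
    (hp1 : (Bp * Matrix.diagonal wp * Bpᵀ) * Ld * (Bp * Matrix.diagonal wp * Bpᵀ) =
      Bp * Matrix.diagonal wp * Bpᵀ)
    (hp2 : Ld * (Bp * Matrix.diagonal wp * Bpᵀ) * Ld = Ld)
    (hp3 : ((Bp * Matrix.diagonal wp * Bpᵀ) * Ld)ᵀ = (Bp * Matrix.diagonal wp * Bpᵀ) * Ld)
    (hp4 : (Ld * (Bp * Matrix.diagonal wp * Bpᵀ))ᵀ = Ld * (Bp * Matrix.diagonal wp * Bpᵀ))
    (u v : V) (huv : u ≠ v) (d : ℝ)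
    -- `d` exceeds the inverse effective resistance between `u` and `v`
    (hd : 1 / ((Pi.single u 1 - Pi.single v 1) ⬝ᵥ
      Ld.mulVec (Pi.single u 1 - Pi.single v 1)) < d) :
    ∃ x₀ : V → ℝ,
      Filter.Tendsto
        (fun t : ℝ =>
          ‖(NormedSpace.exp
              (-(t • (Bp * Matrix.diagonal wp * Bpᵀ -
                d • Matrix.vecMulVec (Pi.single u 1 - Pi.single v 1)
                  (Pi.single u 1 - Pi.single v 1))))).mulVec x₀‖)
        Filter.atTop Filter.atTop := by
  classical
  set y : V → ℝ := Pi.single u 1 - Pi.single v 1 with hy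
  set Lp : Matrix V V ℝ := Bp * Matrix.diagonal wp * Bpᵀ with hLp
  set L : Matrix V V ℝ := Lp - d • Matrix.vecMulVec y y with hLdef
  set o : V → ℝ := fun _ => (1 : ℝ) with ho
  -- basic kernel facts
  have hker : ∀ z : V → ℝ, Bpᵀ *ᵥ z = 0 → ∃ c : ℝ, z = c • o := by
    intro z hz
    have hmem : z ∈ LinearMap.ker Bpᵀ.mulVecLin := by
      rw [LinearMap.mem_ker, Matrix.mulVecLin_apply, hz]
    rw [hConn, Submodule.mem_span_singleton] at hmem
    obtain ⟨c, hc⟩ := hmem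
    exact ⟨c, hc.symm⟩
  have h1vec : Bpᵀ *ᵥ o = 0 := by
    have hmem : o ∈ LinearMap.ker Bpᵀ.mulVecLin := by
      rw [hConn]; exact Submodule.subset_span rfl
    rw [LinearMap.mem_ker, Matrix.mulVecLin_apply] at hmem
    exact hmem
  have hLpker : ∀ z : V → ℝ, Bpᵀ *ᵥ z = 0 → Lp *ᵥ z = 0 := by
    intro z hz
    rw [hLp, ← Matrix.mulVec_mulVec, hz, Matrix.mulVec_zero]
  have hLp1 : Lp *ᵥ o = 0 := hLpker o h1vec
  have hLpT : Lpᵀ = Lp := by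
    rw [hLp, Matrix.transpose_mul, Matrix.transpose_mul, Matrix.transpose_transpose,
      Matrix.diagonal_transpose, Matrix.mul_assoc]
  -- quadratic form of Lp
  have hquad : ∀ z : V → ℝ, z ⬝ᵥ (Lp *ᵥ z) = ∑ e, wp e * ((Bpᵀ *ᵥ z) e) ^ 2 := by
    intro z
    have h1 : Lp *ᵥ z = Bp *ᵥ ((Matrix.diagonal wp) *ᵥ (Bpᵀ *ᵥ z)) := by
      rw [hLp, Matrix.mulVec_mulVec, Matrix.mulVec_mulVec]
    rw [h1, Matrix.dotProduct_mulVec, ← Matrix.mulVec_transpose]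
    simp only [dotProduct, Matrix.mulVec_diagonal]
    exact Finset.sum_congr rfl fun e _ => by ring
  have hquadnn : ∀ z : V → ℝ, 0 ≤ z ⬝ᵥ (Lp *ᵥ z) := by
    intro z
    rw [hquad]
    exact Finset.sum_nonneg fun e _ => mul_nonneg (hwp e).le (sq_nonneg _)
  have hquadzero : ∀ z : V → ℝ, z ⬝ᵥ (Lp *ᵥ z) = 0 → Bpᵀ *ᵥ z = 0 := by
    intro z hz
    rw [hquad] at hz
    funext e
    have := (Finset.sum_eq_zero_iff_of_nonneg
      (fun e _ => mul_nonneg (hwp e).le (sq_nonneg ((Bpᵀ *ᵥ z) e)))).mp hz e (Finset.mem_univ e)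
    have h2 : ((Bpᵀ *ᵥ z) e) ^ 2 = 0 := by
      rcases mul_eq_zero.mp this with h | h
      · exact absurd h (hwp e).ne'
      · exact h
    simpa using pow_eq_zero_iff (n := 2) two_ne_zero |>.mp h2
  -- y is in the range of Lp
  have hyu : y u = 1 := by simp [hy, Pi.single_apply, huv]
  have hoy : o ⬝ᵥ y = 0 := by
    show (fun _ : V => (1:ℝ)) ⬝ᵥ (Pi.single u 1 - Pi.single v 1) = 0
    simp [dotProduct, Pi.single_apply, Finset.sum_sub_distrib, huv]
  have hPy : Lp *ᵥ (Ld *ᵥ y) = y := by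
    set q : V → ℝ := y - Lp *ᵥ (Ld *ᵥ y) with hq
    have hPq : (Lp * Ld) *ᵥ q = 0 := by
      rw [hq, Matrix.mulVec_sub, Matrix.mulVec_mulVec, hp1, Matrix.mulVec_mulVec]
      exact sub_self _
    have hqLq : q ⬝ᵥ (Lp *ᵥ q) = 0 := by
      have h1 : Lp *ᵥ q = (Lp * Ld) *ᵥ (Lp *ᵥ q) := by
        rw [Matrix.mulVec_mulVec, hp1]
      rw [h1, Matrix.dotProduct_mulVec, ← Matrix.mulVec_transpose, hp3, hPq,
        zero_dotProduct]
    obtain ⟨c, hc⟩ := hker q (hquadzero q hqLq)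
    have hoq : o ⬝ᵥ q = 0 := by
      rw [hq, dotProduct_sub, hoy, Matrix.mulVec_mulVec, Matrix.dotProduct_mulVec]
      have : o ᵥ* (Lp * Ld) = 0 := by
        rw [← Matrix.vecMul_vecMul]
        have h1 : o ᵥ* Lp = 0 := by rw [← hLpT, Matrix.vecMul_transpose, hLp1]
        rw [h1, Matrix.zero_vecMul]
      rw [this, zero_dotProduct, sub_zero]
    have hcard : (0 : ℝ) < (Fintype.card V : ℝ) := by
      exact_mod_cast Fintype.card_pos
    have hc0 : c = 0 := by
      have : o ⬝ᵥ (c • o) = c * Fintype.card V := by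
        show (fun _ : V => (1:ℝ)) ⬝ᵥ (c • fun _ : V => (1:ℝ)) = c * Fintype.card V
        simp [dotProduct, Finset.sum_const, nsmul_eq_mul, mul_comm]
      rw [hc, this] at hoq
      rcases mul_eq_zero.mp hoq with h | h
      · exact h
      · exact absurd h hcard.ne'
    have : q = 0 := by rw [hc, hc0, zero_smul]
    rw [hq] at this
    exact (sub_eq_zero.mp this).symm
  -- effective resistance is positive
  set z : V → ℝ := Ld *ᵥ y with hz
  set R : ℝ := y ⬝ᵥ z with hR
  have hzLz : z ⬝ᵥ (Lp *ᵥ z) = R := by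
    rw [hPy, dotProduct_comm]
  have hRpos : 0 < R := by
    rcases eq_or_lt_of_le (hquadnn z) with h0 | h
    · exfalso
      have hBz : Bpᵀ *ᵥ z = 0 := hquadzero z h0.symm
      have : Lp *ᵥ z = 0 := hLpker z hBz
      rw [hPy] at this
      rw [this] at hyu
      simpa using hyu
    · rwa [hzLz] at h
  have hdR : 1 < d * R := (div_lt_iff₀ hRpos).mp hd
  -- the quadratic form of L is negative at z
  have hvv : (Matrix.vecMulVec y y) *ᵥ z = (y ⬝ᵥ z) • y := by
    funext i
    simp [Matrix.mulVec, Matrix.vecMulVec_apply, dotProduct, Finset.mul_sum, mul_assoc,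
      Finset.sum_mul, mul_comm, mul_left_comm]
  have hneg : z ⬝ᵥ (L *ᵥ z) < 0 := by
    have : L *ᵥ z = Lp *ᵥ z - d • ((y ⬝ᵥ z) • y) := by
      rw [hLdef, Matrix.sub_mulVec, Matrix.smul_mulVec, hvv]
    rw [this, dotProduct_sub, dotProduct_smul, dotProduct_smul, hzLz]
    have hzy : z ⬝ᵥ y = R := by rw [dotProduct_comm, hR]
    rw [← hR, hzy]
    have : R - d * (R * R) = R * (1 - d * R) := by ring
    rw [smul_eq_mul, smul_eq_mul, this]
    exact mul_neg_of_pos_of_neg hRpos (by linarith)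
  -- L is Hermitian and has a negative eigenvalue
  have hLH : L.IsHermitian := by
    have hyyT : (Matrix.vecMulVec y y)ᵀ = Matrix.vecMulVec y y := by
      ext i j
      simp [Matrix.vecMulVec_apply, mul_comm]
    show Lᴴ = L
    have : Lᴴ = Lᵀ := rfl
    rw [this, hLdef, Matrix.transpose_sub, hLpT, Matrix.transpose_smul, hyyT]
  have hex : ∃ i : V, hLH.eigenvalues i < 0 := by
    by_contra hcon
    push_neg at hcon
    have hpsd := hLH.posSemidef_iff_eigenvalues_nonneg.mpr hcon
    have h2 := hpsd.dotProduct_mulVec_nonneg z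
    have hstar : star z = z := rfl
    rw [hstar] at h2
    linarith
  obtain ⟨i, hi⟩ := hex
  set w : V → ℝ := ⇑(hLH.eigenvectorBasis i) with hw
  have hw0 : w ≠ 0 := fun h => hLH.eigenvectorBasis.orthonormal.ne_zero i
    (by simpa [hw] using congrArg (WithLp.toLp 2) h)
  have hwvec : L *ᵥ w = hLH.eigenvalues i • w := hLH.mulVec_eigenvectorBasis i
  refine ⟨w, ?_⟩
  have key : ∀ t : ℝ, (NormedSpace.exp (-(t • L))).mulVec w
      = Real.exp (t * (-hLH.eigenvalues i)) • w := by
    intro t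
    have hA : (-(t • L)) *ᵥ w = (t * (-hLH.eigenvalues i)) • w := by
      rw [Matrix.neg_mulVec, Matrix.smul_mulVec, hwvec, smul_smul, ← neg_smul]
      congr 1
      ring
    exact exp_mulVec_eigen _ w _ hA
  simp only [key]
  have hnorm : ∀ t : ℝ, ‖Real.exp (t * (-hLH.eigenvalues i)) • w‖
      = Real.exp (t * (-hLH.eigenvalues i)) * ‖w‖ := by
    intro t
    rw [norm_smul, Real.norm_eq_abs, Real.abs_exp]
  simp only [hnorm]
  have h1 : Filter.Tendsto (fun t : ℝ => t * (-hLH.eigenvalues i)) Filter.atTop Filter.atTop :=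
    Filter.tendsto_id.atTop_mul_const (neg_pos.mpr hi)
  exact ((Real.tendsto_exp_atTop.comp h1).atTop_mul_const (norm_pos_iff.mpr hw0))
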